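/- Let n, k be positive integers with 1 ≤ k ≤ n - 1 and 0 < p < 1. Then (√n/√(8·k·(n-k)))·e^{-n·D(k/n‖p)} ≤ b_{n,k}(p) < (√n/√(2π·k·(n-k)))·e^{-n·D(k/n‖p)}, and moreover (√n·φ₋(n,k)/√(k·(n-k)))·e^{-n·D(k/n‖p)} < b_{n,k}(p) < (√n·φ₊(n,k)/√(k·(n-k)))·e^{-n·D(k/n‖p)}. -/

import Mathlib

open Real

/-- Binomial probability `b_{n,k}(p)`. -/
noncomputable def b (n k : ℕ) (p : ℝ) : ℝ :=
  (n.choose k : ℝ) * p ^ k * (1 - p) ^ (n - k)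

/-- Relative entropy `D(f‖p)`. -/
noncomputable def D (f p : ℝ) : ℝ :=
  f * Real.log (f / p) + (1 - f) * Real.log ((1 - f) / (1 - p))

/-- `φ₊(n,k)`. -/
noncomputable def phiPlus (n k : ℝ) : ℝ :=
  1 / Real.sqrt (2 * Real.pi) *
    Real.exp (1 / (12 * n + 1) - 1 / (12 * k + 1) - 1 / (12 * (n - k) + 1))

/-- `φ₋(n,k)`. -/
noncomputable def phiMinus (n k : ℝ) : ℝ :=
  1 / Real.sqrt (2 * Real.pi) *
    Real.exp (1 / (12 * n) - 1 / (12 * k) - 1 / (12 * (n - k)))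

set_option linter.unusedTactic false
set_option linter.unreachableTactic false
set_option linter.unnecessarySeqFocus false

open Filter Stirling Topology

namespace BPPB

noncomputable def rr (m : ℕ) : ℝ := Real.log (stirlingSeq m) - Real.log (Real.sqrt π)

lemma sqrtpi_pos : (0:ℝ) < Real.sqrt π := Real.sqrt_pos.2 Real.pi_pos

lemma rr_tendsto : Tendsto rr atTop (𝓝 0) := by
  have h := (Real.continuousAt_log sqrtpi_pos.ne').tendsto.comp
    Stirling.tendsto_stirlingSeq_sqrt_pi
  have h2 := h.sub_const (Real.log (Real.sqrt π))
  show Tendsto (fun m : ℕ => Real.log (stirlingSeq m) - Real.log (Real.sqrt π)) atTop (𝓝 0)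
  simpa [rr, Function.comp] using h2

lemma G_hasSum (m : ℕ) :
    HasSum (fun k : ℕ => (1 : ℝ) / (2 * ((k:ℝ) + 1) + 1) *
      (((1:ℝ) / (2 * ((m:ℝ) + 1) + 1)) ^ 2) ^ (k + 1))
      (rr (m + 1) - rr (m + 2)) := by
  have h := Stirling.log_stirlingSeq_diff_hasSum m
  have h2 : rr (m+1) - rr (m+2) =
      Real.log (stirlingSeq (m+1)) - Real.log (stirlingSeq (m+2)) := by
    simp [rr]
  rw [h2]
  convert h using 2 with k
  all_goals push_cast; try ring

lemma x_pos (m : ℕ) : (0:ℝ) < ((1:ℝ) / (2 * ((m:ℝ) + 1) + 1)) ^ 2 := by positivity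

lemma x_lt_one (m : ℕ) : ((1:ℝ) / (2 * ((m:ℝ) + 1) + 1)) ^ 2 < 1 := by
  have hm : (0:ℝ) ≤ m := Nat.cast_nonneg m
  rw [div_pow, one_pow, div_lt_one (by positivity)]
  nlinarith

lemma G_ub0 (m : ℕ) :
    rr (m + 1) - rr (m + 2) < 1 / (12 * ((m:ℝ)+1)) - 1 / (12 * ((m:ℝ)+2)) := by
  set x : ℝ := ((1:ℝ) / (2 * ((m:ℝ) + 1) + 1)) ^ 2 with hxdef
  have hx0 : 0 < x := x_pos m
  have hx1 : x < 1 := x_lt_one m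
  have hgeo : HasSum (fun k : ℕ => (1/3 : ℝ) * x ^ (k+1)) (1/3 * x * (1 - x)⁻¹) := by
    have h := (hasSum_geometric_of_lt_one hx0.le hx1).mul_left (1/3 * x)
    convert h using 2 with k
    · rfl
    rw [pow_succ]; ring
  have hlt : rr (m + 1) - rr (m + 2) < 1/3 * x * (1 - x)⁻¹ := by
    refine hasSum_lt (i := 1) ?_ ?_ (G_hasSum m) hgeo
    · intro k
      have hx : (0:ℝ) ≤ x ^ (k+1) := by positivity
      have hle : (1 : ℝ) / (2 * ((k:ℝ) + 1) + 1) ≤ 1/3 := by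
        apply div_le_div_of_nonneg_left (by norm_num) (by norm_num)
        have : (0:ℝ) ≤ k := Nat.cast_nonneg k
        linarith
      exact mul_le_mul_of_nonneg_right hle hx
    · have hx : (0:ℝ) < x ^ (1+1) := by positivity
      apply mul_lt_mul_of_pos_right _ hx
      norm_num
  refine hlt.trans_le (le_of_eq ?_)
  have hm : (0:ℝ) ≤ m := Nat.cast_nonneg m
  have h1 : (1:ℝ) - x = ((2*((m:ℝ)+1)+1)^2 - 1) / (2*((m:ℝ)+1)+1)^2 := by
    rw [hxdef]; field_simp
  have hpos : (0:ℝ) < (2*((m:ℝ)+1)+1)^2 - 1 := by nlinarith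
  rw [hxdef, h1, inv_div, div_pow, one_pow]
  field_simp [hpos.ne']
  ring

lemma G_lb0 (m : ℕ) :
    1 / (12 * ((m:ℝ)+1) + 1) - 1 / (12 * ((m:ℝ)+2) + 1) < rr (m + 1) - rr (m + 2) := by
  refine lt_of_lt_of_le ?_ (le_hasSum (G_hasSum m) 0 (fun j _ => by positivity))
  have hm : (0:ℝ) ≤ m := Nat.cast_nonneg m
  norm_num
  rw [inv_eq_one_div, inv_eq_one_div, inv_eq_one_div]
  rw [div_sub_div _ _ (by positivity) (by positivity), div_mul_div_comm]
  rw [div_lt_div_iff₀ (by positivity) (by positivity)]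
  nlinarith


lemma G_ub (m : ℕ) (hm : 1 ≤ m) :
    rr m - rr (m+1) < 1 / (12 * (m:ℝ)) - 1 / (12 * ((m:ℝ)+1)) := by
  obtain ⟨j, rfl⟩ : ∃ j, m = j + 1 := ⟨m - 1, (Nat.succ_pred_eq_of_pos hm).symm⟩
  have := G_ub0 j
  push_cast
  push_cast at this
  convert this using 3 <;> ring

lemma G_lb (m : ℕ) (hm : 1 ≤ m) :
    1 / (12 * (m:ℝ) + 1) - 1 / (12 * ((m:ℝ)+1) + 1) < rr m - rr (m+1) := by
  obtain ⟨j, rfl⟩ : ∃ j, m = j + 1 := ⟨m - 1, (Nat.succ_pred_eq_of_pos hm).symm⟩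
  have := G_lb0 j
  push_cast
  push_cast at this
  convert this using 3 <;> ring

lemma rr_le (m : ℕ) (hm : 1 ≤ m) : rr m ≤ 1 / (12 * (m:ℝ)) := by
  have key : ∀ N : ℕ, rr m ≤ 1 / (12 * (m:ℝ)) - 1 / (12 * ((m:ℝ) + N)) + rr (m + N) := by
    intro N
    induction N with
    | zero => simp
    | succ N ih =>
      have hmN : 1 ≤ m + N := by omega
      have h := G_ub (m + N) hmN
      push_cast at h ⊢
      have : rr (m + N) - rr (m + N + 1) <
          1 / (12 * ((m:ℝ) + N)) - 1 / (12 * ((m:ℝ) + N + 1)) := by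
        convert h using 3 <;> push_cast <;> ring
      have hidx : m + (N + 1) = (m + N) + 1 := by omega
      rw [hidx]
      push_cast at ih
      ring_nf at this ih ⊢
      linarith
  have hlim : Tendsto (fun N : ℕ => 1 / (12 * (m:ℝ)) - 1 / (12 * ((m:ℝ) + N)) + rr (m + N))
      atTop (𝓝 (1 / (12 * (m:ℝ)) - 0 + 0)) := by
    apply Tendsto.add
    · apply Tendsto.sub tendsto_const_nhds
      have h1 : Tendsto (fun N : ℕ => 12 * ((m:ℝ) + N)) atTop atTop := by
        apply Tendsto.const_mul_atTop (by norm_num : (0:ℝ) < 12)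
        exact tendsto_atTop_add_const_left _ _ tendsto_natCast_atTop_atTop
      simpa only [one_div, Pi.inv_def] using h1.inv_tendsto_atTop
    · have := rr_tendsto.comp (tendsto_add_atTop_nat m)
      simpa [Function.comp_def, Nat.add_comm] using this
  have := ge_of_tendsto' hlim key
  simpa using this

lemma rr_ge (m : ℕ) (hm : 1 ≤ m) : 1 / (12 * (m:ℝ) + 1) ≤ rr m := by
  have key : ∀ N : ℕ, 1 / (12 * (m:ℝ) + 1) - 1 / (12 * ((m:ℝ) + N) + 1) + rr (m + N) ≤ rr m := by
    intro N
    induction N with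
    | zero => simp
    | succ N ih =>
      have hmN : 1 ≤ m + N := by omega
      have h := G_lb (m + N) hmN
      have : 1 / (12 * ((m:ℝ) + N) + 1) - 1 / (12 * ((m:ℝ) + N + 1) + 1) <
          rr (m + N) - rr (m + N + 1) := by
        convert h using 3 <;> push_cast <;> ring
      have hidx : m + (N + 1) = (m + N) + 1 := by omega
      rw [hidx]
      push_cast at ih ⊢
      ring_nf at this ih ⊢
      linarith
  have hlim : Tendsto (fun N : ℕ => 1 / (12 * (m:ℝ) + 1) - 1 / (12 * ((m:ℝ) + N) + 1) + rr (m + N))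
      atTop (𝓝 (1 / (12 * (m:ℝ) + 1) - 0 + 0)) := by
    apply Tendsto.add
    · apply Tendsto.sub tendsto_const_nhds
      have h1 : Tendsto (fun N : ℕ => 12 * ((m:ℝ) + N) + 1) atTop atTop := by
        apply tendsto_atTop_add_const_right
        apply Tendsto.const_mul_atTop (by norm_num : (0:ℝ) < 12)
        exact tendsto_atTop_add_const_left _ _ tendsto_natCast_atTop_atTop
      simpa only [one_div, Pi.inv_def] using h1.inv_tendsto_atTop
    · have := rr_tendsto.comp (tendsto_add_atTop_nat m)
      simpa [Function.comp_def, Nat.add_comm] using this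
  have := le_of_tendsto' hlim key
  simpa using this

lemma rr_lt (m : ℕ) (hm : 1 ≤ m) : rr m < 1 / (12 * (m:ℝ)) := by
  have h1 := G_ub m hm
  have h2 := rr_le (m+1) (by omega)
  push_cast at h2
  linarith

lemma rr_gt (m : ℕ) (hm : 1 ≤ m) : 1 / (12 * (m:ℝ) + 1) < rr m := by
  have h1 := G_lb m hm
  have h2 := rr_ge (m+1) (by omega)
  push_cast at h2
  linarith


/-- `s`-monotonicity: `1/(12b) - rr b < 1/(12a) - rr a` for `1 ≤ a < b`. -/
lemma s_mono {a b : ℕ} (ha : 1 ≤ a) (hab : a < b) :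
    1 / (12 * (b:ℝ)) - rr b < 1 / (12 * (a:ℝ)) - rr a := by
  induction b with
  | zero => omega
  | succ b ih =>
    rcases Nat.lt_or_ge a b with h | h
    · have hb : 1 ≤ b := by omega
      have step := G_ub b hb
      have := ih h
      push_cast at *
      linarith
    · have hab' : a = b := by omega
      subst hab'
      have step := G_ub a ha
      push_cast
      linarith

lemma t_mono {a b : ℕ} (ha : 1 ≤ a) (hab : a < b) :
    rr b - 1 / (12 * (b:ℝ) + 1) < rr a - 1 / (12 * (a:ℝ) + 1) := by
  induction b with
  | zero => omega
  | succ b ih =>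
    rcases Nat.lt_or_ge a b with h | h
    · have hb : 1 ≤ b := by omega
      have step := G_lb b hb
      have := ih h
      push_cast at *
      linarith
    · have hab' : a = b := by omega
      subst hab'
      have step := G_lb a ha
      push_cast
      linarith

lemma E_ub (k m : ℕ) (hk : 1 ≤ k) (hm : 1 ≤ m) :
    rr (k+m) - rr k - rr m <
      1 / (12 * ((k:ℝ)+(m:ℝ)) + 1) - 1 / (12 * (k:ℝ) + 1) - 1 / (12 * (m:ℝ) + 1) := by
  have h1 := t_mono hk (show k < k + m by omega)
  have h2 := rr_gt m hm
  push_cast at h1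
  linarith

lemma E_lb (k m : ℕ) (hk : 1 ≤ k) (hm : 1 ≤ m) :
    1 / (12 * ((k:ℝ)+(m:ℝ))) - 1 / (12 * (k:ℝ)) - 1 / (12 * (m:ℝ)) <
      rr (k+m) - rr k - rr m := by
  have h1 := s_mono hk (show k < k + m by omega)
  have h2 := rr_lt m hm
  push_cast at h1
  linarith

/-- `G` is antitone on `m ≥ 1`. -/
lemma G_step_le (m : ℕ) (hm : 1 ≤ m) :
    rr (m+1) - rr (m+2) ≤ rr m - rr (m+1) := by
  have h1 := G_ub (m+1) (by omega)
  have h2 := G_lb m hm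
  have hm' : (1:ℝ) ≤ m := by exact_mod_cast hm
  push_cast at h1
  have harith : 1 / (12 * ((m:ℝ)+1)) - 1 / (12 * ((m:ℝ)+1+1)) ≤
      1 / (12 * (m:ℝ) + 1) - 1 / (12 * ((m:ℝ)+1) + 1) := by
    rw [div_sub_div _ _ (by positivity) (by positivity),
      div_sub_div _ _ (by positivity) (by positivity),
      div_le_div_iff₀ (by positivity) (by positivity)]
    nlinarith
  linarith

lemma G_anti {a c : ℕ} (ha : 1 ≤ a) (hac : a ≤ c) :
    rr c - rr (c+1) ≤ rr a - rr (a+1) := by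
  induction c with
  | zero => omega
  | succ c ih =>
    rcases Nat.lt_or_ge a (c+1) with h | h
    · have hc : 1 ≤ c := by omega
      have := ih (by omega)
      have := G_step_le c hc
      linarith
    · have : a = c + 1 := by omega
      subst this
      linarith

/-- For fixed `k ≥ 1` and `n ≥ 2k`: `rr n - rr (n-k) ≥ rr (2k) - rr k`. -/
lemma psi_mono (k : ℕ) (hk : 1 ≤ k) : ∀ n, 2*k ≤ n → rr (2*k) - rr k ≤ rr n - rr (n-k) := by
  intro n hn
  induction n with
  | zero => omega
  | succ n ih =>
    rcases Nat.lt_or_ge n (2*k) with h | h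
    · have : n + 1 = 2*k := by omega
      rw [this]
      have : 2*k - k = k := by omega
      rw [this]
    · have ihh := ih h
      have h1 : rr n - rr (n+1) ≤ rr (n-k) - rr (n-k+1) :=
        G_anti (by omega) (by omega)
      have h2 : n + 1 - k = (n - k) + 1 := by omega
      rw [h2]
      linarith

/-- `h(k) = rr (2k) - 2 rr k` is monotone increasing in `k ≥ 1`. -/
lemma h_step (k : ℕ) (hk : 1 ≤ k) :
    rr (2*k) - 2 * rr k ≤ rr (2*(k+1)) - 2 * rr (k+1) := by
  have hGk := G_lb k hk
  have hG2k := G_ub (2*k) (by omega)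
  have hG2k1 := G_ub (2*k+1) (by omega)
  have e1 : 2*(k+1) = (2*k+1) + 1 := by omega
  rw [e1]
  have hk' : (1:ℝ) ≤ k := by exact_mod_cast hk
  push_cast at hG2k hG2k1
  have harith : (1 / (12 * (2*(k:ℝ))) - 1 / (12 * (2*(k:ℝ)+1)))
      + (1 / (12 * (2*(k:ℝ)+1)) - 1 / (12 * (2*(k:ℝ)+1+1)))
      ≤ 2 * (1 / (12 * (k:ℝ) + 1) - 1 / (12 * ((k:ℝ)+1) + 1)) := by
    have e2 : 1 / (12 * (2*(k:ℝ))) - 1 / (12 * (2*(k:ℝ)+1))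
      + (1 / (12 * (2*(k:ℝ)+1)) - 1 / (12 * (2*(k:ℝ)+1+1)))
      = 1 / (24 * (k:ℝ)) - 1 / (24*(k:ℝ) + 24) := by ring_nf
    rw [e2, div_sub_div _ _ (by positivity) (by positivity),
      div_sub_div _ _ (by positivity) (by positivity), ← mul_div_assoc]
    rw [div_le_div_iff₀ (by positivity) (by positivity)]
    nlinarith
  linarith

lemma h_mono (k : ℕ) (hk : 1 ≤ k) : rr 2 - 2 * rr 1 ≤ rr (2*k) - 2 * rr k := by
  induction k with
  | zero => omega
  | succ k ih =>
    rcases Nat.lt_or_ge 0 k with h | h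
    · have := ih (by omega)
      have := h_step k (by omega)
      linarith
    · have : k = 0 := by omega
      subst this
      norm_num

lemma base_eq : rr 2 - 2 * rr 1 = Real.log (Real.sqrt π) - Real.log 2 := by
  have hS1 : stirlingSeq 1 = Real.exp 1 / Real.sqrt 2 := stirlingSeq_one
  have hS2 : stirlingSeq 2 = Real.exp 1 ^ 2 / 4 := by
    rw [stirlingSeq]
    norm_num [Nat.factorial]
    rw [show Real.exp 2 = Real.exp 1 ^ 2 by rw [← Real.exp_nat_mul]; norm_num]
    rw [div_pow]
    field_simp
    ring
  have he : Real.log (Real.exp 1) = 1 := Real.log_exp 1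
  have h1 : Real.log (stirlingSeq 1) = 1 - Real.log (Real.sqrt 2) := by
    rw [hS1, Real.log_div (Real.exp_ne_zero 1) (by positivity), he]
  have h2 : Real.log (stirlingSeq 2) = 2 - Real.log 4 := by
    rw [hS2, Real.log_div (by positivity) (by norm_num), Real.log_pow, he]
    norm_num
  have h3 : Real.log (Real.sqrt 2) = Real.log 2 / 2 := Real.log_sqrt (by norm_num)
  have h4 : Real.log 4 = 2 * Real.log 2 := by
    rw [show ((4:ℝ)) = 2^2 by norm_num, Real.log_pow]
    norm_num
  simp only [rr, h1, h2, h3, h4]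
  ring

/-- The key sharp bound `rr (k+m) - rr k - rr m ≥ log √π - log 2`. -/
lemma E_ge (k m : ℕ) (hk : 1 ≤ k) (hm : 1 ≤ m) :
    Real.log (Real.sqrt π) - Real.log 2 ≤ rr (k+m) - rr k - rr m := by
  have main : ∀ a b : ℕ, 1 ≤ a → a ≤ b →
      Real.log (Real.sqrt π) - Real.log 2 ≤ rr (a+b) - rr a - rr b := by
    intro a b ha hab
    have h1 := psi_mono a ha (a+b) (by omega)
    have h2 : a + b - a = b := by omega
    rw [h2] at h1
    have h3 := h_mono a ha
    rw [base_eq] at h3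
    linarith
  rcases Nat.le_total k m with h | h
  · exact main k m hk h
  · have := main m k hm h
    rw [Nat.add_comm] at this
    linarith


lemma factorial_eq (m : ℕ) (hm : 1 ≤ m) :
    (m.factorial : ℝ) = Real.sqrt π * Real.exp (rr m) * (Real.sqrt (2*(m:ℝ)) * ((m:ℝ)/Real.exp 1)^m) := by
  obtain ⟨j, rfl⟩ : ∃ j, m = j + 1 := ⟨m - 1, (Nat.succ_pred_eq_of_pos hm).symm⟩
  have hSpos := stirlingSeq'_pos j
  have hS : Real.sqrt π * Real.exp (rr (j+1)) = stirlingSeq (j+1) := by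
    rw [rr, Real.exp_sub, Real.exp_log hSpos, Real.exp_log sqrtpi_pos]
    field_simp
  rw [hS, stirlingSeq]
  have hm' : (0:ℝ) < ((j:ℝ)+1) := by positivity
  have hd : Real.sqrt (2*((j+1:ℕ):ℝ)) * (((j+1:ℕ):ℝ)/Real.exp 1)^(j+1) ≠ 0 := by
    push_cast
    positivity
  push_cast at hd ⊢
  field_simp

lemma exp_negD (n k : ℕ) (hk1 : 1 ≤ k) (hcond : k + 1 ≤ n) {p : ℝ} (hp0 : 0 < p) (hp1 : p < 1) :
    Real.exp (-((n:ℝ) * D ((k:ℝ)/n) p)) =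
      (n:ℝ)^n * p^k * (1-p)^(n-k) / ((k:ℝ)^k * (((n-k : ℕ)):ℝ)^(n-k)) := by
  have hkn : k ≤ n := by omega
  have hM : ((n-k:ℕ):ℝ) = (n:ℝ) - (k:ℝ) := by
    push_cast [Nat.cast_sub hkn]; ring
  have hK0 : (0:ℝ) < (k:ℝ) := by exact_mod_cast hk1
  have hN0 : (0:ℝ) < (n:ℝ) := by
    have : (0:ℕ) < n := by omega
    exact_mod_cast this
  have hM0 : (0:ℝ) < ((n-k:ℕ):ℝ) := by
    have : (0:ℕ) < n - k := by omega
    exact_mod_cast this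
  have hq0 : 0 < 1 - p := by linarith
  have hD : (n:ℝ) * D ((k:ℝ)/(n:ℝ)) p =
      (k:ℝ) * Real.log ((k:ℝ)/((n:ℝ)*p)) + ((n-k:ℕ):ℝ) * Real.log (((n-k:ℕ):ℝ)/((n:ℝ)*(1-p))) := by
    rw [D]
    have h1 : 1 - (k:ℝ)/(n:ℝ) = ((n-k:ℕ):ℝ)/(n:ℝ) := by rw [hM]; field_simp
    rw [h1, div_div, div_div]
    field_simp
  have hneg : -((n:ℝ) * D ((k:ℝ)/(n:ℝ)) p) =
      (k:ℝ) * Real.log (((n:ℝ)*p)/(k:ℝ)) + ((n-k:ℕ):ℝ) * Real.log (((n:ℝ)*(1-p))/((n-k:ℕ):ℝ)) := by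
    rw [hD]
    have e1 : Real.log ((k:ℝ)/((n:ℝ)*p)) = - Real.log (((n:ℝ)*p)/(k:ℝ)) := by
      rw [← Real.log_inv, inv_div]
    have e2 : Real.log (((n-k:ℕ):ℝ)/((n:ℝ)*(1-p))) =
        - Real.log (((n:ℝ)*(1-p))/((n-k:ℕ):ℝ)) := by
      rw [← Real.log_inv, inv_div]
    rw [e1, e2]; ring
  rw [hneg, Real.exp_add]
  have hA : 0 < (n:ℝ)*p/(k:ℝ) := by positivity
  have hB : 0 < (n:ℝ)*(1-p)/((n-k:ℕ):ℝ) := by positivity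
  rw [Real.exp_nat_mul, Real.exp_nat_mul, Real.exp_log hA, Real.exp_log hB]
  have hKk : ((k:ℝ))^k ≠ 0 := by positivity
  have hMm : (((n-k:ℕ):ℝ))^(n-k) ≠ 0 := by positivity
  have hnn : ((n:ℝ))^n = ((n:ℝ))^k * ((n:ℝ))^(n-k) := by
    rw [← pow_add]; congr 1; omega
  rw [div_pow, div_pow, mul_pow (n:ℝ) p, mul_pow (n:ℝ) (1-p), div_mul_div_comm, hnn]
  ring

set_option maxHeartbeats 800000 in
lemma b_eq (n k : ℕ) (hk1 : 1 ≤ k) (hcond : k + 1 ≤ n) {p : ℝ} (hp0 : 0 < p) (hp1 : p < 1) :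
    b n k p = Real.sqrt (n:ℝ) / Real.sqrt ((k:ℝ) * ((n-k:ℕ):ℝ)) *
      (Real.exp (rr n - rr k - rr (n-k)) / Real.sqrt (2*π)) *
      Real.exp (-((n:ℝ) * D ((k:ℝ)/n) p)) := by
  have hkn : k ≤ n := by omega
  have hn1 : 1 ≤ n := by omega
  have hnk1 : 1 ≤ n - k := by omega
  have hK0 : (0:ℝ) < k := by exact_mod_cast hk1
  have hN0 : (0:ℝ) < n := by exact_mod_cast hn1
  have hM0 : (0:ℝ) < ((n-k:ℕ):ℝ) := by exact_mod_cast hnk1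
  rw [exp_negD n k hk1 hcond hp0 hp1]
  rw [b, Nat.cast_choose ℝ hkn]
  rw [factorial_eq n hn1, factorial_eq k hk1, factorial_eq (n-k) hnk1]
  rw [Real.exp_sub, Real.exp_sub]
  rw [Real.sqrt_mul (by norm_num : (0:ℝ) ≤ 2) (n:ℝ),
    Real.sqrt_mul (by norm_num : (0:ℝ) ≤ 2) (k:ℝ),
    Real.sqrt_mul (by norm_num : (0:ℝ) ≤ 2) ((n-k:ℕ):ℝ),
    Real.sqrt_mul (by norm_num : (0:ℝ) ≤ 2) π,
    Real.sqrt_mul (Nat.cast_nonneg k) ((n-k:ℕ):ℝ)]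
  rw [div_pow, div_pow, div_pow]
  have hpow : (Real.exp 1)^n = (Real.exp 1)^k * (Real.exp 1)^(n-k) := by
    rw [← pow_add]; congr 1; omega
  rw [hpow]
  have h2 : Real.sqrt 2 ≠ 0 := by positivity
  have hpi : Real.sqrt π ≠ 0 := sqrtpi_pos.ne'
  have hsk : Real.sqrt (k:ℝ) ≠ 0 := by positivity
  have hsn : Real.sqrt (n:ℝ) ≠ 0 := by positivity
  have hsm : Real.sqrt ((n-k:ℕ):ℝ) ≠ 0 := by positivity
  have hek : (Real.exp 1)^k ≠ 0 := by positivity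
  have hem : (Real.exp 1)^(n-k) ≠ 0 := by positivity
  have hKk : (k:ℝ)^k ≠ 0 := by positivity
  have hMm : ((n-k:ℕ):ℝ)^(n-k) ≠ 0 := by positivity
  have hex : Real.exp (rr k) ≠ 0 := Real.exp_ne_zero _
  have hex2 : Real.exp (rr (n-k)) ≠ 0 := Real.exp_ne_zero _
  have hMc : ((n-k:ℕ):ℝ) = (n:ℝ) - (k:ℝ) := by push_cast [Nat.cast_sub hkn]; ring
  have hM0' : (0:ℝ) < (n:ℝ) - (k:ℝ) := by rw [← hMc]; exact hM0
  have hsm' : Real.sqrt ((n:ℝ) - (k:ℝ)) ≠ 0 := by positivity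
  have hMm' : ((n:ℝ) - (k:ℝ))^(n-k) ≠ 0 := by positivity
  field_simp


end BPPB

open BPPB

theorem binomial_point_probability_bounds
    (n k : ℕ) (hk : 1 ≤ k) (hkn : k ≤ n - 1) (p : ℝ) (hp0 : 0 < p) (hp1 : p < 1) :
    (Real.sqrt n / Real.sqrt (8 * k * ((n : ℝ) - k)) *
        Real.exp (-(n * D ((k : ℝ) / n) p)) ≤ b n k p ∧
      b n k p < Real.sqrt n / Real.sqrt (2 * Real.pi * k * ((n : ℝ) - k)) *
        Real.exp (-(n * D ((k : ℝ) / n) p))) ∧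
    (Real.sqrt n * phiMinus n k / Real.sqrt (k * ((n : ℝ) - k)) *
        Real.exp (-(n * D ((k : ℝ) / n) p)) < b n k p ∧
      b n k p < Real.sqrt n * phiPlus n k / Real.sqrt (k * ((n : ℝ) - k)) *
        Real.exp (-(n * D ((k : ℝ) / n) p))) := by
  have hcond : k + 1 ≤ n := by omega
  have hkn' : k ≤ n := by omega
  set m := n - k with hmdef
  have hm1 : 1 ≤ m := by omega
  have hnm : k + m = n := by omega
  have hK0 : (0:ℝ) < k := by exact_mod_cast hk
  have hN0 : (0:ℝ) < n := by exact_mod_cast Nat.pos_of_ne_zero (by omega)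
  have hM0 : (0:ℝ) < m := by exact_mod_cast hm1
  have hMc : ((m:ℕ):ℝ) = (n:ℝ) - (k:ℝ) := by push_cast [hmdef, Nat.cast_sub hkn']; ring
  have hNc : (k:ℝ) + (m:ℝ) = (n:ℝ) := by exact_mod_cast congrArg (Nat.cast : ℕ → ℝ) hnm
  -- the common positive factor
  set Q : ℝ := Real.sqrt (n:ℝ) / Real.sqrt ((k:ℝ) * (m:ℝ)) *
      Real.exp (-((n:ℝ) * D ((k:ℝ)/n) p)) with hQdef
  have hQ : 0 < Q := by
    rw [hQdef]
    have h1 : 0 < Real.sqrt (n:ℝ) := Real.sqrt_pos.2 hN0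
    have h2 : 0 < Real.sqrt ((k:ℝ) * (m:ℝ)) := Real.sqrt_pos.2 (by positivity)
    exact mul_pos (div_pos h1 h2) (Real.exp_pos _)
  set E : ℝ := rr n - rr k - rr m with hEdef
  have hb : b n k p = Real.exp E / Real.sqrt (2*π) * Q := by
    rw [b_eq n k hk hcond hp0 hp1, hQdef, hEdef, hmdef]
    ring
  have sqrt2pi_pos : (0:ℝ) < Real.sqrt (2*π) := Real.sqrt_pos.2 (by positivity)
  -- E bounds
  have hEub : E < 1 / (12*(n:ℝ) + 1) - 1 / (12*(k:ℝ) + 1) - 1 / (12*(m:ℝ) + 1) := by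
    have h := E_ub k m hk hm1
    rw [hnm, hNc] at h
    exact h
  have hElb : 1 / (12*(n:ℝ)) - 1 / (12*(k:ℝ)) - 1 / (12*(m:ℝ)) < E := by
    have h := E_lb k m hk hm1
    rw [hnm, hNc] at h
    exact h
  have hEge : Real.log (Real.sqrt π) - Real.log 2 ≤ E := by
    have h := E_ge k m hk hm1
    rw [hnm] at h
    exact h
  have hE0 : E < 0 := by
    have h1 : 1 / (12*(n:ℝ) + 1) ≤ 1 / (12*(k:ℝ) + 1) := by
      apply one_div_le_one_div_of_le (by positivity)
      have : (k:ℝ) ≤ n := by exact_mod_cast hkn'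
      linarith
    have h2 : 0 < 1 / (12*(m:ℝ) + 1) := by positivity
    linarith
  refine ⟨⟨?_, ?_⟩, ?_, ?_⟩
  · -- lower 1/√8
    rw [← hMc]
    have h8 : Real.sqrt (8 * (k:ℝ) * (m:ℝ)) = Real.sqrt 8 * Real.sqrt ((k:ℝ)*(m:ℝ)) := by
      rw [mul_assoc, Real.sqrt_mul (by norm_num)]
    rw [h8]
    have heq : Real.sqrt (n:ℝ) / (Real.sqrt 8 * Real.sqrt ((k:ℝ)*(m:ℝ))) *
        Real.exp (-((n:ℝ) * D ((k:ℝ)/n) p)) = 1 / Real.sqrt 8 * Q := by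
      rw [hQdef]; ring
    rw [heq, hb]
    refine mul_le_mul_of_nonneg_right ?_ hQ.le
    have hexp : Real.sqrt π / 2 ≤ Real.exp E := by
      have h := Real.exp_le_exp.2 hEge
      rwa [Real.exp_sub, Real.exp_log (Real.sqrt_pos.2 Real.pi_pos),
        Real.exp_log (by norm_num : (0:ℝ) < 2)] at h
    have h2pi : Real.sqrt (2*π) = Real.sqrt 2 * Real.sqrt π := Real.sqrt_mul (by norm_num) _
    have h8' : Real.sqrt 8 = 2 * Real.sqrt 2 := by
      rw [show (8:ℝ) = 2^2 * 2 by norm_num, Real.sqrt_mul (by positivity), Real.sqrt_sq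
        (by norm_num : (0:ℝ) ≤ 2)]
    have hs2 : (0:ℝ) < Real.sqrt 2 := Real.sqrt_pos.2 (by norm_num)
    have hspi : (0:ℝ) < Real.sqrt π := Real.sqrt_pos.2 Real.pi_pos
    rw [h2pi, h8', div_le_div_iff₀ (by positivity) (by positivity)]
    nlinarith [mul_le_mul_of_nonneg_right hexp (by positivity : (0:ℝ) ≤ 2 * Real.sqrt 2)]
  · -- upper 1/√(2π)
    rw [← hMc]
    have h2 : Real.sqrt (2 * π * (k:ℝ) * (m:ℝ)) =
        Real.sqrt (2*π) * Real.sqrt ((k:ℝ)*(m:ℝ)) := by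
      rw [mul_assoc, Real.sqrt_mul (by positivity)]
    rw [h2]
    have heq : Real.sqrt (n:ℝ) / (Real.sqrt (2*π) * Real.sqrt ((k:ℝ)*(m:ℝ))) *
        Real.exp (-((n:ℝ) * D ((k:ℝ)/n) p)) = 1 / Real.sqrt (2*π) * Q := by
      rw [hQdef]; ring
    rw [heq, hb]
    refine mul_lt_mul_of_pos_right ?_ hQ
    have hlt : Real.exp E < 1 := by
      calc Real.exp E < Real.exp 0 := Real.exp_lt_exp.2 hE0
        _ = 1 := Real.exp_zero
    gcongr
  · -- phiMinus
    rw [← hMc]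
    simp only [phiMinus]
    rw [← hMc]
    have heq : Real.sqrt (n:ℝ) * (1 / Real.sqrt (2*π) *
        Real.exp (1/(12*(n:ℝ)) - 1/(12*(k:ℝ)) - 1/(12*(m:ℝ)))) / Real.sqrt ((k:ℝ)*(m:ℝ)) *
        Real.exp (-((n:ℝ) * D ((k:ℝ)/n) p)) =
        Real.exp (1/(12*(n:ℝ)) - 1/(12*(k:ℝ)) - 1/(12*(m:ℝ))) / Real.sqrt (2*π) * Q := by
      rw [hQdef]; ring
    rw [heq, hb]
    refine mul_lt_mul_of_pos_right ?_ hQ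
    have hlt := Real.exp_lt_exp.2 hElb
    gcongr
  · -- phiPlus
    rw [← hMc]
    simp only [phiPlus]
    rw [← hMc]
    have heq : Real.sqrt (n:ℝ) * (1 / Real.sqrt (2*π) *
        Real.exp (1/(12*(n:ℝ)+1) - 1/(12*(k:ℝ)+1) - 1/(12*(m:ℝ)+1))) / Real.sqrt ((k:ℝ)*(m:ℝ)) *
        Real.exp (-((n:ℝ) * D ((k:ℝ)/n) p)) =
        Real.exp (1/(12*(n:ℝ)+1) - 1/(12*(k:ℝ)+1) - 1/(12*(m:ℝ)+1)) / Real.sqrt (2*π) * Q := by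
      rw [hQdef]; ring
    rw [heq, hb]
    refine mul_lt_mul_of_pos_right ?_ hQ
    have hlt := Real.exp_lt_exp.2 hEub
    gcongr
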